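/- arXiv:1410.7269 — 4 statements merged into one kernel-verified Lean document; each statement's English description precedes it below -/
import Mathlib

section
/- Let f : ℝ → ℝ with f(a) = a, and let h be a Lipschitz map with constant L on a neighborhood of a whose inverse h⁻¹ is Lipschitz with constant M on a neighborhood of b = h(a). If lim_{x→a} |f(x) - x| / |x - a|^μ = 0, then the conjugate g = h ∘ f ∘ h⁻¹ satisfies lim_{y→b} |g(y) - y| / |y - b|^μ = 0. -/
open Filter Topology

theorem stmt_0 (μ : ℕ) (hμ : 1 ≤ μ) (f h hinv : ℝ → ℝ) (a b : ℝ) (L M : NNReal)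
    (Ih Jb : Set ℝ) (hIh : Ih ∈ 𝓝 a) (hJb : Jb ∈ 𝓝 b)
    (hfa : f a = a) (hb : h a = b)
    (hL : LipschitzOnWith L h Ih) (hM : LipschitzOnWith M hinv Jb)
    (hleft : ∀ x ∈ Ih, hinv (h x) = x) (hright : ∀ y ∈ Jb, h (hinv y) = y)
    (hlim : Tendsto (fun x => |f x - x| / |x - a| ^ μ) (𝓝[≠] a) (𝓝 0)) :
    Tendsto (fun y => |h (f (hinv y)) - y| / |y - b| ^ μ) (𝓝[≠] b) (𝓝 0) := by
  have haIh : a ∈ Ih := mem_of_mem_nhds hIh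
  have hbJb : b ∈ Jb := mem_of_mem_nhds hJb
  have hinvb : hinv b = a := by rw [← hb, hleft a haIh]
  -- M > 0
  have hMpos : (0:ℝ) < M := by
    rcases eq_or_lt_of_le (M.coe_nonneg) with hM0 | h'
    · exfalso
      obtain ⟨ε, hε, hball⟩ := Metric.mem_nhds_iff.mp hJb
      have hy : b + ε/2 ∈ Jb := by
        apply hball
        rw [Metric.mem_ball, Real.dist_eq]
        rw [abs_of_pos (by linarith : (0:ℝ) < b + ε/2 - b)]
        linarith
      have hd := hM.dist_le_mul _ hy _ hbJb
      rw [← hM0, zero_mul] at hd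
      have heq : hinv (b + ε/2) = hinv b := dist_le_zero.mp hd
      have h1 : h (hinv (b + ε/2)) = b + ε/2 := hright _ hy
      have h2 : h (hinv b) = b := hright _ hbJb
      rw [heq, h2] at h1
      linarith
    · exact h'
  -- hinv tends to a within ≠
  have hinvcont : ContinuousAt hinv b :=
    (hM.continuousOn.continuousWithinAt hbJb).continuousAt hJb
  have htendx : Tendsto hinv (𝓝[≠] b) (𝓝[≠] a) := by
    rw [tendsto_nhdsWithin_iff]
    constructor
    · have := hinvcont.tendsto.mono_left (nhdsWithin_le_nhds (s := {b}ᶜ))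
      rwa [hinvb] at this
    · filter_upwards [eventually_nhdsWithin_of_eventually_nhds hJb,
        eventually_mem_nhdsWithin] with y hy hy'
      intro hcon
      rw [Set.mem_singleton_iff] at hcon
      have hyb : y ≠ b := hy'
      apply hyb
      have := hright y hy
      rw [hcon, hb] at this
      exact this.symm
  -- f tends to a within ≠ a
  have hftend : Tendsto f (𝓝[≠] a) (𝓝 a) := by
    have hbound : ∀ᶠ x in 𝓝[≠] a, |f x - x| ≤ |x - a| ^ μ := by
      filter_upwards [hlim.eventually (eventually_le_nhds (by norm_num : (0:ℝ) < 1)),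
        eventually_mem_nhdsWithin] with x hx hx'
      have hxa : (0:ℝ) < |x - a| ^ μ := by
        apply pow_pos
        rw [abs_pos, sub_ne_zero]
        exact hx'
      calc |f x - x| = |f x - x| / |x - a| ^ μ * |x - a| ^ μ := by field_simp
        _ ≤ 1 * |x - a| ^ μ := mul_le_mul_of_nonneg_right hx (le_of_lt hxa)
        _ = |x - a| ^ μ := one_mul _
    have hdiff : Tendsto (fun x => f x - x) (𝓝[≠] a) (𝓝 0) := by
      rw [tendsto_zero_iff_abs_tendsto_zero]
      apply squeeze_zero' (by filter_upwards with x using abs_nonneg _) hbound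
      have : Tendsto (fun x : ℝ => |x - a| ^ μ) (𝓝 a) (𝓝 (|a - a| ^ μ)) :=
        ((continuous_abs.comp (continuous_id.sub continuous_const)).pow μ).tendsto a
      simp only [sub_self, abs_zero, zero_pow (Nat.one_le_iff_ne_zero.mp hμ)] at this
      exact this.mono_left nhdsWithin_le_nhds
    have : Tendsto (fun x => (f x - x) + x) (𝓝[≠] a) (𝓝 (0 + a)) :=
      hdiff.add (tendsto_id.mono_left nhdsWithin_le_nhds)
    simpa using this
  have hcomp := hlim.comp htendx
  refine squeeze_zero'
    (by filter_upwards with y using div_nonneg (abs_nonneg _) (pow_nonneg (abs_nonneg _) _))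
    ?_ (by simpa using (hcomp.const_mul ((L:ℝ) * (M:ℝ)^μ)))
  filter_upwards [eventually_nhdsWithin_of_eventually_nhds hJb,
    eventually_mem_nhdsWithin,
    htendx.eventually (eventually_nhdsWithin_of_eventually_nhds hIh),
    (hftend.comp htendx).eventually hIh] with y hyJ hyb hxI hfxI
  have hyJ' : y ∈ Jb := hyJ
  have hybne : y ≠ b := hyb
  have hxI' : hinv y ∈ Ih := hxI
  have hfxI' : f (hinv y) ∈ Ih := hfxI
  set x := hinv y with hx
  have hxne : x ≠ a := by
    intro hcon
    apply hybne
    have := hright y hyJ'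
    rw [← hx, hcon, hb] at this
    exact this.symm
  have hhx : h x = y := hright y hyJ'
  have hden1 : (0:ℝ) < |y - b| ^ μ := pow_pos (by rw [abs_pos, sub_ne_zero]; exact hybne) _
  have hden2 : (0:ℝ) < |x - a| ^ μ := pow_pos (by rw [abs_pos, sub_ne_zero]; exact hxne) _
  have hnum : |h (f x) - y| ≤ (L:ℝ) * |f x - x| := by
    have := hL.dist_le_mul _ hfxI' _ hxI'
    rwa [Real.dist_eq, Real.dist_eq, hhx] at this
  have hdenb : |x - a| ≤ (M:ℝ) * |y - b| := by
    have := hM.dist_le_mul _ hyJ' _ hbJb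
    rwa [Real.dist_eq, Real.dist_eq, hinvb] at this
  have hdenpow : |x - a| ^ μ ≤ (M:ℝ)^μ * |y - b| ^ μ := by
    calc |x - a| ^ μ ≤ ((M:ℝ) * |y - b|) ^ μ :=
          pow_le_pow_left₀ (abs_nonneg _) hdenb μ
      _ = (M:ℝ)^μ * |y - b| ^ μ := mul_pow _ _ _
  have key : |h (f x) - y| * |x - a| ^ μ ≤ ((L:ℝ) * (M:ℝ)^μ * |f x - x|) * |y - b| ^ μ := by
    have := mul_le_mul hnum hdenpow (le_of_lt hden2) (by positivity)
    calc |h (f x) - y| * |x - a| ^ μ ≤ ((L:ℝ) * |f x - x|) * ((M:ℝ)^μ * |y - b|^μ) := this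
      _ = ((L:ℝ) * (M:ℝ)^μ * |f x - x|) * |y - b| ^ μ := by ring
  rw [div_le_iff₀ hden1]
  calc |h (f x) - y| = |h (f x) - y| * |x - a| ^ μ / |x - a| ^ μ := by field_simp
    _ ≤ ((L:ℝ) * (M:ℝ)^μ * |f x - x|) * |y - b| ^ μ / |x - a| ^ μ :=
        (div_le_div_iff_of_pos_right hden2).mpr key
    _ = (L:ℝ) * (M:ℝ)^μ * (|f x - x| / |x - a| ^ μ) * |y - b| ^ μ := by ring
end

section
/- Let f₀ ∈ C^{μ+1} near a and f₁ ∈ C^{μ+1} near b = f₀(a), with F = f₁ ∘ f₀ and G = f₀ ∘ f₁. Assume F(a) = a, G(b) = b, F'(a) = 1, F^{(i)}(a) = 0 for all 2 ≤ i ≤ μ, and F^{(μ+1)}(a) ≠ 0. Then G^{(i)}(b) = 0 for all 2 ≤ i ≤ μ and G^{(μ+1)}(b) ≠ 0. -/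
open Topology Filter Set

private lemma cda_deriv {n : ℕ} {f : ℝ → ℝ} {x : ℝ} (h : ContDiffAt ℝ (n + 1 : ℕ) f x) :
    ContDiffAt ℝ n (deriv f) x := by
  have h1 : ContDiffAt ℝ n (fderiv ℝ f) x := h.fderiv_right (by norm_cast)
  have h2 : ContDiffAt ℝ n (fun y => fderiv ℝ f y 1) x := h1.clm_apply contDiffAt_const
  exact h2

private lemma ev_diff {n : ℕ} (hn : 1 ≤ n) {f : ℝ → ℝ} {x : ℝ} (h : ContDiffAt ℝ n f x) :
    ∀ᶠ y in 𝓝 x, DifferentiableAt ℝ f y := by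
  filter_upwards [h.eventually (by simp)] with y hy
  exact hy.differentiableAt (by exact_mod_cast (by omega : n ≠ 0))

private lemma itd_of_isOpen {n : ℕ} {f : ℝ → ℝ} {s : Set ℝ} {x : ℝ} (hs : IsOpen s)
    (hx : x ∈ s) : iteratedDerivWithin n f s x = iteratedDeriv n f x := by
  simp only [iteratedDerivWithin, iteratedDeriv, iteratedFDerivWithin_of_isOpen n hs hx]

private lemma itd_add {n : ℕ} {f g : ℝ → ℝ} {x : ℝ} (hf : ContDiffAt ℝ n f x)
    (hg : ContDiffAt ℝ n g x) :
    iteratedDeriv n (fun y => f y + g y) x = iteratedDeriv n f x + iteratedDeriv n g x := by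
  obtain ⟨u, hu, hfu⟩ := hf.contDiffOn le_rfl (by simp)
  obtain ⟨v, hv, hgv⟩ := hg.contDiffOn le_rfl (by simp)
  have hso : IsOpen (interior u ∩ interior v) := isOpen_interior.inter isOpen_interior
  have hxs : x ∈ interior u ∩ interior v :=
    ⟨mem_interior_iff_mem_nhds.2 hu, mem_interior_iff_mem_nhds.2 hv⟩
  have h1 : ContDiffOn ℝ n f (interior u ∩ interior v) :=
    hfu.mono (inter_subset_left.trans interior_subset)
  have h2 : ContDiffOn ℝ n g (interior u ∩ interior v) :=
    hgv.mono (inter_subset_right.trans interior_subset)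
  rw [← itd_of_isOpen (f := fun y => f y + g y) hso hxs, ← itd_of_isOpen (f := f) hso hxs,
    ← itd_of_isOpen (f := g) hso hxs]
  exact iteratedDerivWithin_add hxs hso.uniqueDiffOn (h1 x hxs) (h2 x hxs)

private lemma itd_sub {n : ℕ} {f g : ℝ → ℝ} {x : ℝ} (hf : ContDiffAt ℝ n f x)
    (hg : ContDiffAt ℝ n g x) :
    iteratedDeriv n (fun y => f y - g y) x = iteratedDeriv n f x - iteratedDeriv n g x := by
  have h := itd_add hf hg.neg
  simp only [sub_eq_add_neg]
  rw [show (fun y => f y + -(g y)) = (fun y => f y + (fun z => -(g z)) y) from rfl] at h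
  rw [h, iteratedDeriv_fun_neg]

private lemma itd_zero_fun (m : ℕ) (x : ℝ) : iteratedDeriv m (fun _ : ℝ => (0:ℝ)) x = 0 := by
  induction m generalizing x with
  | zero => simp
  | succ m ih =>
    rw [iteratedDeriv_succ']
    have : deriv (fun _ : ℝ => (0:ℝ)) = fun _ : ℝ => (0:ℝ) := by
      funext y; exact deriv_const y 0
    rw [this, ih]

private lemma itd_const {m : ℕ} (hm : 1 ≤ m) (c : ℝ) (x : ℝ) :
    iteratedDeriv m (fun _ : ℝ => c) x = 0 := by
  obtain ⟨m, rfl⟩ : ∃ k, m = k + 1 := ⟨m - 1, by omega⟩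
  rw [iteratedDeriv_succ']
  have : deriv (fun _ : ℝ => c) = fun _ : ℝ => (0:ℝ) := by
    funext y; exact deriv_const y c
  rw [this, itd_zero_fun]

private lemma itd_id {i : ℕ} (hi : 2 ≤ i) (x : ℝ) :
    iteratedDeriv i (fun y : ℝ => y) x = 0 := by
  obtain ⟨m, rfl⟩ : ∃ k, i = k + 1 := ⟨i - 1, by omega⟩
  rw [iteratedDeriv_succ']
  have : deriv (fun y : ℝ => y) = fun _ : ℝ => (1:ℝ) := by
    funext y; exact deriv_id y
  rw [this, itd_const (by omega)]

/-- Leibniz-lite 1: if `φ` is flat of order `j` at `x`, then `(φ * ψ)⁽ʲ⁾(x) = 0`. -/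
private lemma P1 : ∀ (j : ℕ) {φ ψ : ℝ → ℝ} {x : ℝ}, ContDiffAt ℝ j φ x → ContDiffAt ℝ j ψ x →
    (∀ i ≤ j, iteratedDeriv i φ x = 0) → iteratedDeriv j (fun y => φ y * ψ y) x = 0 := by
  intro j
  induction j with
  | zero =>
    intro φ ψ x _ _ hflat
    have := hflat 0 le_rfl
    simp only [iteratedDeriv_zero] at this ⊢
    rw [this, zero_mul]
  | succ j IH =>
    intro φ ψ x hφ hψ hflat
    have hφ' : ContDiffAt ℝ j (deriv φ) x := cda_deriv hφ
    have hψ' : ContDiffAt ℝ j (deriv ψ) x := cda_deriv hψ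
    have hφj : ContDiffAt ℝ j φ x := hφ.of_le (by exact_mod_cast Nat.le_succ j)
    have hψj : ContDiffAt ℝ j ψ x := hψ.of_le (by exact_mod_cast Nat.le_succ j)
    have hev : deriv (fun y => φ y * ψ y) =ᶠ[𝓝 x] fun y => deriv φ y * ψ y + φ y * deriv ψ y := by
      filter_upwards [ev_diff (by omega) hφ, ev_diff (by omega) hψ] with y h1 h2
      exact deriv_mul h1 h2
    rw [iteratedDeriv_succ', hev.iteratedDeriv_eq j, itd_add (hφ'.mul hψj) (hφj.mul hψ')]
    have e1 : iteratedDeriv j (fun y => deriv φ y * ψ y) x = 0 := by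
      refine IH hφ' hψj fun i hi => ?_
      rw [← iteratedDeriv_succ']
      exact hflat (i + 1) (by omega)
    have e2 : iteratedDeriv j (fun y => φ y * deriv ψ y) x = 0 :=
      IH hφj hψ' fun i hi => hflat i (by omega)
    rw [e1, e2, add_zero]

/-- Leibniz-lite 2: if `φ` is flat of order `< n` at `x`, then `(φψ)⁽ⁿ⁾(x) = φ⁽ⁿ⁾(x)ψ(x)`. -/
private lemma P2 : ∀ (n : ℕ) {φ ψ : ℝ → ℝ} {x : ℝ}, ContDiffAt ℝ n φ x → ContDiffAt ℝ n ψ x →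
    (∀ i < n, iteratedDeriv i φ x = 0) →
    iteratedDeriv n (fun y => φ y * ψ y) x = iteratedDeriv n φ x * ψ x := by
  intro n
  induction n with
  | zero => intro φ ψ x _ _ _; simp
  | succ n IH =>
    intro φ ψ x hφ hψ hflat
    have hφ' : ContDiffAt ℝ n (deriv φ) x := cda_deriv hφ
    have hψ' : ContDiffAt ℝ n (deriv ψ) x := cda_deriv hψ
    have hφn : ContDiffAt ℝ n φ x := hφ.of_le (by exact_mod_cast Nat.le_succ n)
    have hψn : ContDiffAt ℝ n ψ x := hψ.of_le (by exact_mod_cast Nat.le_succ n)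
    have hev : deriv (fun y => φ y * ψ y) =ᶠ[𝓝 x] fun y => deriv φ y * ψ y + φ y * deriv ψ y := by
      filter_upwards [ev_diff (by omega) hφ, ev_diff (by omega) hψ] with y h1 h2
      exact deriv_mul h1 h2
    rw [iteratedDeriv_succ', hev.iteratedDeriv_eq n, itd_add (hφ'.mul hψn) (hφn.mul hψ')]
    have e1 : iteratedDeriv n (fun y => deriv φ y * ψ y) x
        = iteratedDeriv (n + 1) φ x * ψ x := by
      rw [iteratedDeriv_succ']
      refine IH hφ' hψn fun i hi => ?_
      rw [← iteratedDeriv_succ']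
      exact hflat (i + 1) (by omega)
    have e2 : iteratedDeriv n (fun y => φ y * deriv ψ y) x = 0 :=
      P1 n hφn hψ' fun i hi => hflat i (by omega)
    rw [e1, e2, add_zero]

/-- Flat-outer composition, vanishing orders. -/
private lemma A1 : ∀ (j : ℕ) {v u : ℝ → ℝ} {x : ℝ}, ContDiffAt ℝ j v (u x) →
    ContDiffAt ℝ j u x → (∀ i ≤ j, iteratedDeriv i v (u x) = 0) →
    iteratedDeriv j (v ∘ u) x = 0 := by
  intro j
  induction j using Nat.strong_induction_on with
  | _ j IH =>
    intro v u x hv hu hflat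
    match j with
    | 0 =>
      simpa using hflat 0 le_rfl
    | (j + 1) =>
      have hv' : ContDiffAt ℝ j (deriv v) (u x) := cda_deriv hv
      have hu' : ContDiffAt ℝ j (deriv u) x := cda_deriv hu
      have huj : ContDiffAt ℝ j u x := hu.of_le (by exact_mod_cast Nat.le_succ j)
      have hev : deriv (v ∘ u) =ᶠ[𝓝 x] fun y => deriv v (u y) * deriv u y := by
        have h1 : ∀ᶠ y in 𝓝 x, DifferentiableAt ℝ v (u y) :=
          hu.continuousAt.tendsto.eventually (ev_diff (by omega) hv)
        filter_upwards [h1, ev_diff (by omega) hu] with y h1 h2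
        exact deriv_comp y h1 h2
      rw [iteratedDeriv_succ', hev.iteratedDeriv_eq j]
      have hφ : ContDiffAt ℝ j (fun y => deriv v (u y)) x := hv'.comp x huj
      refine P1 j hφ hu' fun i hi => ?_
      have : iteratedDeriv i (deriv v ∘ u) x = 0 := by
        refine IH i (by omega) (hv'.of_le (by exact_mod_cast hi))
          (huj.of_le (by exact_mod_cast hi)) fun m hm => ?_
        rw [← iteratedDeriv_succ']
        exact hflat (m + 1) (by omega)
      exact this

/-- Flat-outer composition, top order. -/
private lemma A2 : ∀ (n : ℕ) {v u : ℝ → ℝ} {x : ℝ}, ContDiffAt ℝ n v (u x) →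
    ContDiffAt ℝ n u x → (∀ i < n, iteratedDeriv i v (u x) = 0) →
    iteratedDeriv n (v ∘ u) x = iteratedDeriv n v (u x) * (deriv u x) ^ n := by
  intro n
  induction n with
  | zero => intro v u x _ _ _; simp [Function.comp]
  | succ n IH =>
    intro v u x hv hu hflat
    have hv' : ContDiffAt ℝ n (deriv v) (u x) := cda_deriv hv
    have hu' : ContDiffAt ℝ n (deriv u) x := cda_deriv hu
    have hun : ContDiffAt ℝ n u x := hu.of_le (by exact_mod_cast Nat.le_succ n)
    have hev : deriv (v ∘ u) =ᶠ[𝓝 x] fun y => deriv v (u y) * deriv u y := by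
      have h1 : ∀ᶠ y in 𝓝 x, DifferentiableAt ℝ v (u y) :=
        hu.continuousAt.tendsto.eventually (ev_diff (by omega) hv)
      filter_upwards [h1, ev_diff (by omega) hu] with y h1 h2
      exact deriv_comp y h1 h2
    rw [iteratedDeriv_succ', hev.iteratedDeriv_eq n]
    have hφ : ContDiffAt ℝ n (fun y => deriv v (u y)) x := hv'.comp x hun
    have hflatφ : ∀ i < n, iteratedDeriv i (fun y => deriv v (u y)) x = 0 := by
      intro i hi
      have : iteratedDeriv i (deriv v ∘ u) x = 0 := by
        refine A1 i (hv'.of_le (by exact_mod_cast hi.le))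
          (hun.of_le (by exact_mod_cast hi.le)) fun m hm => ?_
        rw [← iteratedDeriv_succ']
        exact hflat (m + 1) (by omega)
      exact this
    rw [P2 n hφ hu' hflatφ]
    have : iteratedDeriv n (fun y => deriv v (u y)) x
        = iteratedDeriv n (deriv v) (u x) * (deriv u x) ^ n := by
      exact IH hv' hun fun i hi => by
        rw [← iteratedDeriv_succ']; exact hflat (i + 1) (by omega)
    rw [this, ← iteratedDeriv_succ']
    ring

/-- Tangent-to-identity inner composition: low orders. -/
private lemma B1 : ∀ (j : ℕ) {v u : ℝ → ℝ} {x : ℝ}, ContDiffAt ℝ j v x → ContDiffAt ℝ j u x →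
    u x = x → deriv u x = 1 → (∀ i, 2 ≤ i → i ≤ j → iteratedDeriv i u x = 0) →
    iteratedDeriv j (v ∘ u) x = iteratedDeriv j v x := by
  intro j
  induction j using Nat.strong_induction_on with
  | _ j IH =>
    intro v u x hv hu hux hu1 hflat
    match j with
    | 0 => simp [Function.comp, hux]
    | (j + 1) =>
      have hvx : ContDiffAt ℝ (j + 1 : ℕ) v (u x) := by rw [hux]; exact hv
      have hv' : ContDiffAt ℝ j (deriv v) x := cda_deriv hv
      have hu' : ContDiffAt ℝ j (deriv u) x := cda_deriv hu
      have huj : ContDiffAt ℝ j u x := hu.of_le (by exact_mod_cast Nat.le_succ j)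
      have hev : deriv (v ∘ u) =ᶠ[𝓝 x]
          fun y => (deriv u y - 1) * deriv v (u y) + deriv v (u y) := by
        have h1 : ∀ᶠ y in 𝓝 x, DifferentiableAt ℝ v (u y) :=
          hu.continuousAt.tendsto.eventually (ev_diff (by omega) hvx)
        filter_upwards [h1, ev_diff (by omega) hu] with y h1 h2
        rw [deriv_comp y h1 h2]; ring
      rw [iteratedDeriv_succ', hev.iteratedDeriv_eq j]
      have hc1 : ContDiffAt ℝ j (fun y => deriv v (u y)) x := by
        have := ((by rw [hux]; exact hv' : ContDiffAt ℝ j (deriv v) (u x))).comp x huj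
        exact this
      have hc0 : ContDiffAt ℝ j (fun y => deriv u y - 1) x := hu'.sub contDiffAt_const
      rw [itd_add (hc0.mul hc1) hc1]
      have e2 : iteratedDeriv j (fun y => deriv v (u y)) x = iteratedDeriv j (deriv v) x := by
        have : iteratedDeriv j (deriv v ∘ u) x = iteratedDeriv j (deriv v) x :=
          IH j (by omega) hv' huj hux hu1 fun i h2i hij => hflat i h2i (by omega)
        exact this
      have e1 : iteratedDeriv j (fun y => (deriv u y - 1) * deriv v (u y)) x = 0 := by
        refine P1 j hc0 hc1 fun i hi => ?_
        match i with
        | 0 => simp [hu1]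
        | (m + 1) =>
          have : iteratedDeriv (m + 1) (fun y => deriv u y - 1) x
              = iteratedDeriv (m + 1) (deriv u) x - iteratedDeriv (m + 1) (fun _ : ℝ => (1:ℝ)) x :=
            itd_sub (hu'.of_le (by exact_mod_cast hi)) contDiffAt_const
          rw [this, itd_const (by omega), ← iteratedDeriv_succ', hflat (m + 2) (by omega) (by omega),
            sub_zero]
      rw [e1, e2, zero_add, ← iteratedDeriv_succ']

/-- Tangent-to-identity inner composition: top order. -/
private lemma B2 (n : ℕ) (hn : 2 ≤ n) {v u : ℝ → ℝ} {x : ℝ} (hv : ContDiffAt ℝ n v x)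
    (hu : ContDiffAt ℝ n u x) (hux : u x = x) (hu1 : deriv u x = 1)
    (hflat : ∀ i, 2 ≤ i → i < n → iteratedDeriv i u x = 0) :
    iteratedDeriv n (v ∘ u) x = iteratedDeriv n v x + deriv v x * iteratedDeriv n u x := by
  obtain ⟨m, rfl⟩ : ∃ k, n = k + 1 := ⟨n - 1, by omega⟩
  have hm : 1 ≤ m := by omega
  have hvx : ContDiffAt ℝ (m + 1 : ℕ) v (u x) := by rw [hux]; exact hv
  have hv' : ContDiffAt ℝ m (deriv v) x := cda_deriv hv
  have hu' : ContDiffAt ℝ m (deriv u) x := cda_deriv hu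
  have hum : ContDiffAt ℝ m u x := hu.of_le (by exact_mod_cast Nat.le_succ m)
  have hev : deriv (v ∘ u) =ᶠ[𝓝 x]
      fun y => (deriv u y - 1) * deriv v (u y) + deriv v (u y) := by
    have h1 : ∀ᶠ y in 𝓝 x, DifferentiableAt ℝ v (u y) :=
      hu.continuousAt.tendsto.eventually (ev_diff (by omega) hvx)
    filter_upwards [h1, ev_diff (by omega) hu] with y h1 h2
    rw [deriv_comp y h1 h2]; ring
  rw [iteratedDeriv_succ', hev.iteratedDeriv_eq m]
  have hc1 : ContDiffAt ℝ m (fun y => deriv v (u y)) x :=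
    ((by rw [hux]; exact hv' : ContDiffAt ℝ m (deriv v) (u x))).comp x hum
  have hc0 : ContDiffAt ℝ m (fun y => deriv u y - 1) x := hu'.sub contDiffAt_const
  rw [itd_add (hc0.mul hc1) hc1]
  have e2 : iteratedDeriv m (fun y => deriv v (u y)) x = iteratedDeriv m (deriv v) x := by
    have : iteratedDeriv m (deriv v ∘ u) x = iteratedDeriv m (deriv v) x :=
      B1 m hv' hum hux hu1 fun i h2i him => hflat i h2i (by omega)
    exact this
  have e0 : ∀ i, 1 ≤ i → i ≤ m → iteratedDeriv i (fun y => deriv u y - 1) x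
      = iteratedDeriv (i + 1) u x := by
    intro i h1i him
    have : iteratedDeriv i (fun y => deriv u y - 1) x
        = iteratedDeriv i (deriv u) x - iteratedDeriv i (fun _ : ℝ => (1:ℝ)) x :=
      itd_sub (hu'.of_le (by exact_mod_cast him)) contDiffAt_const
    rw [this, itd_const h1i, sub_zero, ← iteratedDeriv_succ']
  have e1 : iteratedDeriv m (fun y => (deriv u y - 1) * deriv v (u y)) x
      = iteratedDeriv (m + 1) u x * deriv v x := by
    have hflat0 : ∀ i < m, iteratedDeriv i (fun y => deriv u y - 1) x = 0 := by
      intro i hi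
      match i with
      | 0 => simp [hu1]
      | (k + 1) =>
        rw [e0 (k + 1) (by omega) (by omega)]
        exact hflat (k + 2) (by omega) (by omega)
    rw [P2 m hc0 hc1 hflat0, e0 m hm le_rfl, hux]
  rw [e1, e2, ← iteratedDeriv_succ']
  ring

theorem stmt_3 (μ : ℕ) (hμ : 2 ≤ μ) (f₀ f₁ : ℝ → ℝ) (a b : ℝ)
    (hb : f₀ a = b) (ha : f₁ b = a)
    (hf₀ : ContDiffAt ℝ (↑(μ + 1)) f₀ a) (hf₁ : ContDiffAt ℝ (↑(μ + 1)) f₁ b)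
    (hF1 : deriv (f₁ ∘ f₀) a = 1)
    (hFi : ∀ i, 2 ≤ i → i ≤ μ → iteratedDeriv i (f₁ ∘ f₀) a = 0)
    (hFnd : iteratedDeriv (μ + 1) (f₁ ∘ f₀) a ≠ 0) :
    (∀ i, 2 ≤ i → i ≤ μ → iteratedDeriv i (f₀ ∘ f₁) b = 0) ∧
      iteratedDeriv (μ + 1) (f₀ ∘ f₁) b ≠ 0 := by
  set F : ℝ → ℝ := f₁ ∘ f₀ with hF
  set G : ℝ → ℝ := f₀ ∘ f₁ with hG
  set H : ℝ → ℝ := fun y => G y - y with hH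
  set lam : ℝ := deriv f₀ a with hlam
  -- basic smoothness
  have hf₀' : ContDiffAt ℝ (↑(μ + 1)) f₀ (f₁ b) := ha ▸ hf₀
  have hf₁' : ContDiffAt ℝ (↑(μ + 1)) f₁ (f₀ a) := hb ▸ hf₁
  have hGc : ContDiffAt ℝ (↑(μ + 1)) G b := hf₀'.comp b hf₁
  have hFc : ContDiffAt ℝ (↑(μ + 1)) F a := hf₁'.comp a hf₀
  have hHc : ContDiffAt ℝ (↑(μ + 1)) H b := hGc.sub contDiffAt_id
  have hone : (1 : WithTop ℕ∞) ≤ ↑(μ + 1) := by exact_mod_cast Nat.one_le_iff_ne_zero.2 (by omega)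
  have hdf₀ : DifferentiableAt ℝ f₀ a := hf₀.differentiableAt (by exact_mod_cast Nat.succ_ne_zero μ)
  have hdf₁ : DifferentiableAt ℝ f₁ b := hf₁.differentiableAt (by exact_mod_cast Nat.succ_ne_zero μ)
  -- fixed points
  have hFa : F a = a := by simp [hF, Function.comp, hb, ha]
  have hGb : G b = b := by simp [hG, Function.comp, ha, hb]
  -- derivatives at the fixed points
  have hderF : deriv f₁ b * lam = 1 := by
    have := deriv_comp a (hb ▸ hdf₁) hdf₀
    rw [hF1] at this; rw [hlam, this, hb]
  have hlam0 : lam ≠ 0 := right_ne_zero_of_mul (hderF ▸ one_ne_zero)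
  have hderG : deriv G b = 1 := by
    have := deriv_comp b (ha ▸ hdf₀) hdf₁
    rw [hG, this, ha, ← hlam, mul_comm, hderF]
  have hH0 : H b = 0 := by simp [hH, hGb]
  have hH1 : deriv H b = 0 := by
    have hdG : DifferentiableAt ℝ G b := hGc.differentiableAt (by exact_mod_cast Nat.succ_ne_zero μ)
    have : deriv H b = deriv G b - deriv (fun y : ℝ => y) b :=
      deriv_fun_sub hdG differentiableAt_fun_id
    rw [this, hderG]; simp
  -- relation between iterated derivatives of G and H for i ≥ 2
  have hGH : ∀ i, 2 ≤ i → i ≤ μ + 1 → iteratedDeriv i G b = iteratedDeriv i H b := by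
    intro i h2 hle
    have hHci : ContDiffAt ℝ i H b := hHc.of_le (by exact_mod_cast hle)
    have : iteratedDeriv i (fun y => H y + y) b
        = iteratedDeriv i H b + iteratedDeriv i (fun y : ℝ => y) b :=
      itd_add hHci contDiffAt_id
    have hfun : G = fun y => H y + y := by funext y; simp [hH]
    rw [hfun, this, itd_id h2 b, add_zero]
  -- main claim by strong induction
  have main : ∀ k, 2 ≤ k → k ≤ μ + 1 →
      iteratedDeriv k H b * lam ^ k = iteratedDeriv k F a * lam := by
    intro k
    induction k using Nat.strong_induction_on with
    | _ k IH =>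
      intro h2k hkμ
      have hkc : (↑k : WithTop ℕ∞) ≤ ↑(μ + 1) := by exact_mod_cast hkμ
      have hHck : ContDiffAt ℝ k H b := hHc.of_le hkc
      have hf₀k : ContDiffAt ℝ k f₀ a := hf₀.of_le hkc
      have hFck : ContDiffAt ℝ k F a := hFc.of_le hkc
      -- flatness of H below k
      have hHflat : ∀ i < k, iteratedDeriv i H b = 0 := by
        intro i hi
        match i with
        | 0 => simpa using hH0
        | 1 => simpa using hH1
        | (m + 2) =>
          have h1 := IH (m + 2) hi (by omega) (by omega)
          have h2 : iteratedDeriv (m + 2) F a = 0 := hFi (m + 2) (by omega) (by omega)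
          rw [h2, zero_mul] at h1
          have : lam ^ (m + 2) ≠ 0 := pow_ne_zero _ hlam0
          exact (mul_eq_zero.1 h1).resolve_right this
      -- left side: A2 applied to H ∘ f₀
      have hHb' : ContDiffAt ℝ k H (f₀ a) := hb ▸ hHck
      have lhs : iteratedDeriv k (H ∘ f₀) a = iteratedDeriv k H b * lam ^ k := by
        have := A2 k hHb' hf₀k (fun i hi => by rw [hb]; exact hHflat i hi)
        rw [this, hb, hlam]
      -- identify H ∘ f₀ with (f₀ ∘ F) - f₀
      have hcomp : H ∘ f₀ = fun x => (f₀ ∘ F) x - f₀ x := rfl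
      have hf₀F : ContDiffAt ℝ k (f₀ ∘ F) a := by
        have : ContDiffAt ℝ k f₀ (F a) := by rw [hFa]; exact hf₀k
        exact this.comp a hFck
      have rhs : iteratedDeriv k (H ∘ f₀) a
          = iteratedDeriv k (f₀ ∘ F) a - iteratedDeriv k f₀ a := by
        rw [hcomp]; exact itd_sub hf₀F hf₀k
      -- B2 applied to f₀ ∘ F
      have hB2 : iteratedDeriv k (f₀ ∘ F) a
          = iteratedDeriv k f₀ a + deriv f₀ a * iteratedDeriv k F a := by
        refine B2 k h2k hf₀k hFck hFa hF1 fun i h2i hik => hFi i h2i (by omega)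
      rw [lhs] at rhs
      rw [hB2] at rhs
      rw [rhs, ← hlam]
      ring
  constructor
  · intro i h2i hiμ
    have h1 := main i h2i (by omega)
    have h2 : iteratedDeriv i F a = 0 := hFi i h2i hiμ
    rw [h2, zero_mul] at h1
    have h3 : iteratedDeriv i H b = 0 :=
      (mul_eq_zero.1 h1).resolve_right (pow_ne_zero _ hlam0)
    rw [hGH i h2i (by omega), h3]
  · intro hcon
    have h1 := main (μ + 1) (by omega) le_rfl
    rw [← hGH (μ + 1) (by omega) le_rfl, hcon, zero_mul] at h1
    exact hFnd ((mul_eq_zero.1 h1.symm).resolve_right hlam0)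
end

section
/- Let f₀ ∈ C^3 near a and f₁ ∈ C^3 near b = f₀(a) with f₁(b) = a. If (f₁ ∘ f₀)'(a) = 1, (f₁ ∘ f₀)''(a) = 0, and (f₁ ∘ f₀)'''(a) = 0, then (f₀ ∘ f₁)'''(b) = 0. -/
open Filter Topology

/-- From `C³` at a point, get an open neighborhood where `f`, `deriv f`,
`deriv (deriv f)` are all differentiable. -/
lemma aux_c3 (f : ℝ → ℝ) (a : ℝ) (hf : ContDiffAt ℝ 3 f a) :
    ∃ t : Set ℝ, IsOpen t ∧ a ∈ t ∧ (∀ x ∈ t, DifferentiableAt ℝ f x) ∧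
      (∀ x ∈ t, DifferentiableAt ℝ (deriv f) x) ∧
      (∀ x ∈ t, DifferentiableAt ℝ (deriv (deriv f)) x) := by
  obtain ⟨u, hu, hcd⟩ := hf.contDiffOn (le_refl 3) (by simp)
  obtain ⟨t, hts, hto, hat⟩ := mem_nhds_iff.mp hu
  have hcd3 : ContDiffOn ℝ 3 f t := hcd.mono hts
  rw [show (3 : WithTop ℕ∞) = 2 + 1 from rfl,
    contDiffOn_succ_iff_deriv_of_isOpen hto] at hcd3
  obtain ⟨hd1, -, hcd2⟩ := hcd3
  rw [show (2 : WithTop ℕ∞) = 1 + 1 from rfl,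
    contDiffOn_succ_iff_deriv_of_isOpen hto] at hcd2
  obtain ⟨hd2, -, hcd1⟩ := hcd2
  have hd3 : DifferentiableOn ℝ (deriv (deriv f)) t := hcd1.differentiableOn one_ne_zero
  exact ⟨t, hto, hat,
    fun x hx => (hd1 x hx).differentiableAt (hto.mem_nhds hx),
    fun x hx => (hd2 x hx).differentiableAt (hto.mem_nhds hx),
    fun x hx => (hd3 x hx).differentiableAt (hto.mem_nhds hx)⟩

/-- Faà di Bruno up to order 3, for ℝ → ℝ. -/
lemma comp_derivs (f g : ℝ → ℝ) (a : ℝ) (hf : ContDiffAt ℝ 3 f a)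
    (hg : ContDiffAt ℝ 3 g (f a)) :
    deriv (g ∘ f) a = deriv g (f a) * deriv f a ∧
    deriv (deriv (g ∘ f)) a =
      deriv (deriv g) (f a) * (deriv f a) ^ 2 +
        deriv g (f a) * deriv (deriv f) a ∧
    deriv (deriv (deriv (g ∘ f))) a =
      deriv (deriv (deriv g)) (f a) * (deriv f a) ^ 3 +
        3 * deriv (deriv g) (f a) * deriv f a * deriv (deriv f) a +
        deriv g (f a) * deriv (deriv (deriv f)) a := by
  obtain ⟨t, hto, hat, hd1, hd2, hd3⟩ := aux_c3 f a hf
  obtain ⟨s, hso, hbs, he1, he2, he3⟩ := aux_c3 g (f a) hg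
  have hfc : ContinuousAt f a := hf.continuousAt
  -- shrink t so that f maps it into s
  have hmem : t ∩ f ⁻¹' s ∈ 𝓝 a :=
    Filter.inter_mem (hto.mem_nhds hat) (hfc.preimage_mem_nhds (hso.mem_nhds hbs))
  have E1 : ∀ᶠ x in 𝓝 a, deriv (g ∘ f) x = deriv g (f x) * deriv f x := by
    filter_upwards [hmem] with x hx
    exact deriv_comp x (he1 _ hx.2) (hd1 _ hx.1)
  have E2 : ∀ᶠ x in 𝓝 a,
      deriv (deriv (g ∘ f)) x =
        deriv (deriv g) (f x) * (deriv f x) ^ 2 + deriv g (f x) * deriv (deriv f) x := by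
    filter_upwards [E1.eventually_nhds, hmem] with x hE hx
    have hE' : deriv (g ∘ f) =ᶠ[𝓝 x] fun y => deriv g (f y) * deriv f y := hE
    rw [hE'.deriv_eq]
    have hA : HasDerivAt (fun y => deriv g (f y))
        (deriv (deriv g) (f x) * deriv f x) x :=
      ((he2 _ hx.2).hasDerivAt).comp x ((hd1 _ hx.1).hasDerivAt)
    have hB : HasDerivAt (deriv f) (deriv (deriv f) x) x := (hd2 _ hx.1).hasDerivAt
    have := (hA.mul hB).deriv
    change deriv ((fun y => deriv g (f y)) * deriv f) x = _
    rw [this]; ring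
  have haa : a ∈ t ∩ f ⁻¹' s := ⟨hat, hbs⟩
  have hfa : HasDerivAt f (deriv f a) a := (hd1 _ hat).hasDerivAt
  have hfa2 : HasDerivAt (deriv f) (deriv (deriv f) a) a := (hd2 _ hat).hasDerivAt
  have hfa3 : HasDerivAt (deriv (deriv f)) (deriv (deriv (deriv f)) a) a :=
    (hd3 _ hat).hasDerivAt
  have hga : HasDerivAt g (deriv g (f a)) (f a) := (he1 _ hbs).hasDerivAt
  have hga2 : HasDerivAt (deriv g) (deriv (deriv g) (f a)) (f a) := (he2 _ hbs).hasDerivAt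
  have hga3 : HasDerivAt (deriv (deriv g)) (deriv (deriv (deriv g)) (f a)) (f a) :=
    (he3 _ hbs).hasDerivAt
  refine ⟨deriv_comp a (he1 _ hbs) (hd1 _ hat), E2.self_of_nhds, ?_⟩
  have E2' : deriv (deriv (g ∘ f)) =ᶠ[𝓝 a]
      fun x => deriv (deriv g) (f x) * (deriv f x) ^ 2 + deriv g (f x) * deriv (deriv f) x := E2
  rw [E2'.deriv_eq]
  have hA : HasDerivAt (fun y => deriv (deriv g) (f y))
      (deriv (deriv (deriv g)) (f a) * deriv f a) a := hga3.comp a hfa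
  have hB : HasDerivAt (fun y => (deriv f y) ^ 2)
      (2 * deriv f a ^ 1 * deriv (deriv f) a) a := hfa2.pow 2
  have hC : HasDerivAt (fun y => deriv g (f y))
      (deriv (deriv g) (f a) * deriv f a) a := hga2.comp a hfa
  have H := ((hA.mul hB).add (hC.mul hfa3)).deriv
  change deriv (((fun y => deriv (deriv g) (f y)) * fun y => deriv f y ^ 2) + (fun y => deriv g (f y)) * deriv (deriv f)) a = _
  rw [H]; ring

lemma iteratedDeriv_two (f : ℝ → ℝ) : iteratedDeriv 2 f = deriv (deriv f) := by
  rw [show (2 : ℕ) = 1 + 1 from rfl, iteratedDeriv_succ, iteratedDeriv_one]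

lemma iteratedDeriv_three (f : ℝ → ℝ) : iteratedDeriv 3 f = deriv (deriv (deriv f)) := by
  rw [show (3 : ℕ) = 2 + 1 from rfl, iteratedDeriv_succ, iteratedDeriv_two]

theorem stmt_5 (f₀ f₁ : ℝ → ℝ) (a b : ℝ)
    (hb : f₀ a = b) (ha : f₁ b = a)
    (hf₀ : ContDiffAt ℝ 3 f₀ a) (hf₁ : ContDiffAt ℝ 3 f₁ b)
    (hF1 : deriv (f₁ ∘ f₀) a = 1)
    (hF2 : iteratedDeriv 2 (f₁ ∘ f₀) a = 0)
    (hF3 : iteratedDeriv 3 (f₁ ∘ f₀) a = 0) :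
    iteratedDeriv 3 (f₀ ∘ f₁) b = 0 := by
  subst hb
  have hf₁' : ContDiffAt ℝ 3 f₁ (f₀ a) := hf₁
  have hf₀' : ContDiffAt ℝ 3 f₀ (f₁ (f₀ a)) := by rwa [ha]
  obtain ⟨c1, c2, c3⟩ := comp_derivs f₀ f₁ a hf₀ hf₁'
  obtain ⟨d1, d2, d3⟩ := comp_derivs f₁ f₀ (f₀ a) hf₁' hf₀'
  rw [iteratedDeriv_two] at hF2
  rw [iteratedDeriv_three] at hF3
  rw [iteratedDeriv_three, d3, ha]
  rw [c1] at hF1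
  rw [c2] at hF2
  rw [c3] at hF3
  set p := deriv f₀ a
  set q := deriv (deriv f₀) a
  set r := deriv (deriv (deriv f₀)) a
  set P := deriv f₁ (f₀ a)
  set Q := deriv (deriv f₁) (f₀ a)
  set R := deriv (deriv (deriv f₁)) (f₀ a)
  have hp : p ≠ 0 := by
    intro h; rw [h, mul_zero] at hF1; exact one_ne_zero hF1.symm
  have key : p ^ 2 * (r * P ^ 3 + 3 * q * P * Q + p * R) = 0 := by
    linear_combination hF3 + (r * P * (P * p + 1) + 3 * Q * q * p) * hF1
  have h2 : p ^ 2 ≠ 0 := pow_ne_zero 2 hp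
  have := (mul_eq_zero.mp key).resolve_left h2
  linarith [this]
end

section
/- Let h : ℝ → ℝ be a homeomorphism between open neighborhoods of a and b = h(a), Lipschitz with constant L, with h⁻¹ Lipschitz with constant M, and let f fix a with f Lipschitz near a. If c₁ ≤ liminf_{x→a} |f(x)−x|/|x−a|^{μ+1} and g = h∘f∘h⁻¹, then liminf_{y→b} |g(y)−y|/|y−b|^{μ+1} ≥ c₁/(M·L^{μ+1}). -/
open Filter Topology

private lemma lip_tendsto {φ : ℝ → ℝ} {S : Set ℝ} {p C : ℝ}
    (hS : S ∈ 𝓝 p)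
    (hlip : ∀ x ∈ S, ∀ y ∈ S, |φ x - φ y| ≤ C * |x - y|) :
    Filter.Tendsto φ (𝓝 p) (𝓝 (φ p)) := by
  have hp : p ∈ S := mem_of_mem_nhds hS
  rw [tendsto_iff_dist_tendsto_zero]
  refine squeeze_zero' (g := fun y => C * |y - p|)
    (Filter.Eventually.of_forall fun t => dist_nonneg) ?_ ?_
  · filter_upwards [hS] with y hy
    simpa [Real.dist_eq] using hlip y hy p hp
  · have hcont : Continuous fun y : ℝ => C * |y - p| := by continuity
    simpa using hcont.tendsto p

theorem stmt_18 (μ : ℕ) (hμ : 1 ≤ μ) (f h hinv : ℝ → ℝ) (a b : ℝ)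
    (L M K : ℝ) (hL : 0 < L) (hM : 0 < M)
    (Ih Jb U : Set ℝ) (hIh : Ih ∈ 𝓝 a) (hJb : Jb ∈ 𝓝 b) (hU : U ∈ 𝓝 a)
    (hfa : f a = a) (hba : h a = b)
    (hLip : ∀ x ∈ Ih, ∀ y ∈ Ih, |h x - h y| ≤ L * |x - y|)
    (hMip : ∀ x ∈ Jb, ∀ y ∈ Jb, |hinv x - hinv y| ≤ M * |x - y|)
    (hfLip : ∀ x ∈ U, ∀ y ∈ U, |f x - f y| ≤ K * |x - y|)
    (hleft : ∀ x ∈ Ih, hinv (h x) = x) (hright : ∀ y ∈ Jb, h (hinv y) = y)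
    (c₁ : ℝ)
    (hc : c₁ ≤ liminf (fun x => |f x - x| / |x - a| ^ (μ + 1)) (𝓝[≠] a)) :
    c₁ / (M * L ^ (μ + 1)) ≤
      liminf (fun y => |h (f (hinv y)) - y| / |y - b| ^ (μ + 1)) (𝓝[≠] b) := by
  have ha_Ih : a ∈ Ih := mem_of_mem_nhds hIh
  have ha_U : a ∈ U := mem_of_mem_nhds hU
  have hb_Jb : b ∈ Jb := mem_of_mem_nhds hJb
  have hinvb : hinv b = a := by rw [← hba]; exact hleft a ha_Ih
  set D := M * L ^ (μ + 1) with hDdef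
  set E := L * M ^ (μ + 1) with hEdef
  have hDpos : 0 < D := mul_pos hM (pow_pos hL _)
  have hEpos : 0 < E := mul_pos hL (pow_pos hM _)
  -- continuity facts
  have Thinv : Tendsto hinv (𝓝 b) (𝓝 a) := by
    have := lip_tendsto hJb hMip
    rwa [hinvb] at this
  have Tf : Tendsto f (𝓝 a) (𝓝 a) := by
    have := lip_tendsto hU hfLip
    rwa [hfa] at this
  have Th : Tendsto h (𝓝 a) (𝓝 b) := by
    have := lip_tendsto hIh hLip
    rwa [hba] at this
  -- eventual facts near b
  have ev_b : ∀ᶠ y in 𝓝[≠] b, y ∈ Jb ∧ hinv y ∈ Ih ∧ f (hinv y) ∈ Ih ∧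
      h (f (hinv y)) ∈ Jb ∧ hinv y ≠ a ∧ y ≠ b := by
    have e1 : ∀ᶠ y in 𝓝 b, y ∈ Jb := hJb
    have e2 : ∀ᶠ y in 𝓝 b, hinv y ∈ Ih := Thinv.eventually_mem hIh
    have e3 : ∀ᶠ y in 𝓝 b, f (hinv y) ∈ Ih := (Tf.comp Thinv).eventually_mem hIh
    have e4 : ∀ᶠ y in 𝓝 b, h (f (hinv y)) ∈ Jb :=
      (Th.comp (Tf.comp Thinv)).eventually_mem hJb
    have e5 : ∀ᶠ y in 𝓝[≠] b, y ≠ b := eventually_mem_nhdsWithin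
    filter_upwards [(e1.and (e2.and (e3.and e4))).filter_mono nhdsWithin_le_nhds, e5]
      with y hy hyb
    obtain ⟨h1, h2, h3, h4⟩ := hy
    refine ⟨h1, h2, h3, h4, ?_, hyb⟩
    intro hxa
    apply hyb
    have := hright y h1
    rw [hxa, hba] at this
    exact this.symm
  -- eventual facts near a
  have ev_a : ∀ᶠ x in 𝓝[≠] a, x ∈ Ih ∧ f x ∈ Ih ∧ h x ∈ Jb ∧ h x ≠ b ∧ x ≠ a := by
    have e1 : ∀ᶠ x in 𝓝 a, x ∈ Ih := hIh
    have e2 : ∀ᶠ x in 𝓝 a, f x ∈ Ih := Tf.eventually_mem hIh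
    have e3 : ∀ᶠ x in 𝓝 a, h x ∈ Jb := Th.eventually_mem hJb
    have e5 : ∀ᶠ x in 𝓝[≠] a, x ≠ a := eventually_mem_nhdsWithin
    filter_upwards [(e1.and (e2.and e3)).filter_mono nhdsWithin_le_nhds, e5] with x hx hxa
    obtain ⟨h1, h2, h3⟩ := hx
    refine ⟨h1, h2, h3, ?_, hxa⟩
    intro hhb
    apply hxa
    have := hleft x h1
    rw [hhb, hinvb] at this
    exact this.symm
  -- restricted tendstos
  have Thinv' : Tendsto hinv (𝓝[≠] b) (𝓝[≠] a) := by
    rw [tendsto_nhdsWithin_iff]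
    exact ⟨Thinv.mono_left nhdsWithin_le_nhds, ev_b.mono fun y hy => hy.2.2.2.2.1⟩
  have Th' : Tendsto h (𝓝[≠] a) (𝓝[≠] b) := by
    rw [tendsto_nhdsWithin_iff]
    exact ⟨Th.mono_left nhdsWithin_le_nhds, ev_a.mono fun x hx => hx.2.2.2.1⟩
  -- key bound B1 : F (hinv y) ≤ D * G y eventually near b
  have B1 : ∀ᶠ y in 𝓝[≠] b,
      |f (hinv y) - hinv y| / |hinv y - a| ^ (μ + 1) ≤
        D * (|h (f (hinv y)) - y| / |y - b| ^ (μ + 1)) := by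
    filter_upwards [ev_b] with y hy
    obtain ⟨hyJ, hxI, hfxI, hhfJ, hxa, hyb⟩ := hy
    set x := hinv y with hxdef
    have hhx : h x = y := hright y hyJ
    have hnum : |f x - x| ≤ M * |h (f x) - y| := by
      have := hMip (h (f x)) hhfJ y hyJ
      rw [← hhx, hleft (f x) hfxI, hleft x hxI] at this
      rw [hhx] at this
      exact this
    have hden : |y - b| ≤ L * |x - a| := by
      have := hLip x hxI a ha_Ih
      rw [hhx, hba] at this
      exact this
    have hd1 : (0:ℝ) < |x - a| ^ (μ + 1) :=
      pow_pos (abs_pos.mpr (sub_ne_zero.mpr hxa)) _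
    have hd2 : (0:ℝ) < |y - b| ^ (μ + 1) :=
      pow_pos (abs_pos.mpr (sub_ne_zero.mpr hyb)) _
    have hdenpow : |y - b| ^ (μ + 1) ≤ L ^ (μ + 1) * |x - a| ^ (μ + 1) := by
      calc |y - b| ^ (μ + 1) ≤ (L * |x - a|) ^ (μ + 1) :=
            pow_le_pow_left₀ (abs_nonneg _) hden _
        _ = L ^ (μ + 1) * |x - a| ^ (μ + 1) := mul_pow _ _ _
    rw [mul_div_assoc', div_le_div_iff₀ hd1 hd2]
    have hn2 : (0:ℝ) ≤ M * |h (f x) - y| := mul_nonneg hM.le (abs_nonneg _)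
    calc |f x - x| * |y - b| ^ (μ + 1)
        ≤ (M * |h (f x) - y|) * |y - b| ^ (μ + 1) :=
          mul_le_mul_of_nonneg_right hnum hd2.le
      _ ≤ (M * |h (f x) - y|) * (L ^ (μ + 1) * |x - a| ^ (μ + 1)) :=
          mul_le_mul_of_nonneg_left hdenpow hn2
      _ = D * |h (f x) - y| * |x - a| ^ (μ + 1) := by rw [hDdef]; ring
  -- key bound B2 : G (h x) ≤ E * F x eventually near a
  have B2 : ∀ᶠ x in 𝓝[≠] a,
      |h (f (hinv (h x))) - h x| / |h x - b| ^ (μ + 1) ≤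
        E * (|f x - x| / |x - a| ^ (μ + 1)) := by
    filter_upwards [ev_a] with x hx
    obtain ⟨hxI, hfxI, hhxJ, hhxb, hxa⟩ := hx
    rw [hleft x hxI]
    have hnum : |h (f x) - h x| ≤ L * |f x - x| := hLip (f x) hfxI x hxI
    have hden : |x - a| ≤ M * |h x - b| := by
      have := hMip (h x) hhxJ b hb_Jb
      rw [hleft x hxI, hinvb] at this
      exact this
    have hd1 : (0:ℝ) < |x - a| ^ (μ + 1) :=
      pow_pos (abs_pos.mpr (sub_ne_zero.mpr hxa)) _
    have hd2 : (0:ℝ) < |h x - b| ^ (μ + 1) :=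
      pow_pos (abs_pos.mpr (sub_ne_zero.mpr hhxb)) _
    have hdenpow : |x - a| ^ (μ + 1) ≤ M ^ (μ + 1) * |h x - b| ^ (μ + 1) := by
      calc |x - a| ^ (μ + 1) ≤ (M * |h x - b|) ^ (μ + 1) :=
            pow_le_pow_left₀ (abs_nonneg _) hden _
        _ = M ^ (μ + 1) * |h x - b| ^ (μ + 1) := mul_pow _ _ _
    rw [mul_div_assoc', div_le_div_iff₀ hd2 hd1]
    have hn2 : (0:ℝ) ≤ L * |f x - x| := mul_nonneg hL.le (abs_nonneg _)
    calc |h (f x) - h x| * |x - a| ^ (μ + 1)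
        ≤ (L * |f x - x|) * |x - a| ^ (μ + 1) :=
          mul_le_mul_of_nonneg_right hnum hd1.le
      _ ≤ (L * |f x - x|) * (M ^ (μ + 1) * |h x - b| ^ (μ + 1)) :=
          mul_le_mul_of_nonneg_left hdenpow hn2
      _ = E * |f x - x| * |h x - b| ^ (μ + 1) := by rw [hEdef]; ring
  -- rewrite liminfs as sSup
  rw [liminf_eq] at hc ⊢
  set SF := {c : ℝ | ∀ᶠ x in 𝓝[≠] a, c ≤ |f x - x| / |x - a| ^ (μ + 1)} with hSFdef
  set SG := {c : ℝ | ∀ᶠ y in 𝓝[≠] b, c ≤ |h (f (hinv y)) - y| / |y - b| ^ (μ + 1)}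
    with hSGdef
  have zero_SF : (0:ℝ) ∈ SF := by
    simp only [hSFdef, Set.mem_setOf_eq]
    exact Filter.Eventually.of_forall fun x =>
      div_nonneg (abs_nonneg _) (pow_nonneg (abs_nonneg _) _)
  have zero_SG : (0:ℝ) ∈ SG := by
    simp only [hSGdef, Set.mem_setOf_eq]
    exact Filter.Eventually.of_forall fun y =>
      div_nonneg (abs_nonneg _) (pow_nonneg (abs_nonneg _) _)
  have mapGF : ∀ c ∈ SG, c / E ∈ SF := by
    intro c hcm
    have h1 : ∀ᶠ x in 𝓝[≠] a,
        c ≤ |h (f (hinv (h x))) - h x| / |h x - b| ^ (μ + 1) := Th'.eventually hcm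
    filter_upwards [h1, B2] with x hx hx2
    rw [div_le_iff₀' hEpos]
    exact hx.trans hx2
  have mapFG : ∀ c ∈ SF, c / D ∈ SG := by
    intro c hcm
    have h1 : ∀ᶠ y in 𝓝[≠] b,
        c ≤ |f (hinv y) - hinv y| / |hinv y - a| ^ (μ + 1) := Thinv'.eventually hcm
    filter_upwards [h1, B1] with y hy hy2
    rw [div_le_iff₀' hDpos]
    exact hy.trans hy2
  rcases le_or_gt c₁ 0 with hc₁ | hc₁
  · have h0 : c₁ / D ≤ 0 := div_nonpos_of_nonpos_of_nonneg hc₁ hDpos.le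
    refine h0.trans ?_
    by_cases hbdd : BddAbove SG
    · exact le_csSup hbdd zero_SG
    · rw [Real.sSup_of_not_bddAbove hbdd]
  · have hSFbdd : BddAbove SF := by
      by_contra hcon
      rw [Real.sSup_of_not_bddAbove hcon] at hc
      linarith
    obtain ⟨B, hB⟩ := hSFbdd
    have hSGbdd : BddAbove SG := by
      refine ⟨E * B, fun c hcm => ?_⟩
      have := hB (mapGF c hcm)
      rw [div_le_iff₀' hEpos] at this
      exact this
    have key : sSup SF ≤ D * sSup SG := by
      refine csSup_le ⟨0, zero_SF⟩ fun c hcm => ?_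
      have h1 := le_csSup hSGbdd (mapFG c hcm)
      rw [div_le_iff₀ hDpos] at h1
      linarith
    rw [div_le_iff₀ hDpos]
    have := hc.trans key
    linarith
end
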